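/- Let m ≥ 1, 1 ≤ p₁ ≤ … ≤ p_m < ∞, c_k > 0, p₁ > 1, b₁ ≥ 0, and μ ∈ (0,1) with μ b₁ ≤ b_k ≤ b₁/μ for all k. Define Φ'(r) = Σ_{k=1}^m c_k (b_k + r)^{(p_k−2)/2}. Then for every M ≥ 1 and every σ ∈ ℝⁿ with 0 < |σ| ≤ M, one has C₁ (√b₁ + |σ|)^{p₁−2} ≤ Φ'(|σ|²) ≤ C₂ (√b₁ + |σ|)^{p₁−2}, where C₁ = c₁ (1/2)^{|p₁−2|/2} and C₂ = (2/μ)^{|p₁−2|/2} Σ_{k=1}^m c_k (b₁/μ + M²)^{(p_k−p₁)/2}. -/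
import Mathlib

private lemma aux_up (x t C : ℝ) (hx : 0 < x) (ht : 0 < t) (hC : 1 ≤ C)
    (h1 : t / C ≤ x) (h2 : x ≤ C * t) (e : ℝ) : x ^ e ≤ C ^ |e| * t ^ e := by
  have hC0 : 0 < C := by linarith
  rcases le_or_gt 0 e with he | he
  · rw [abs_of_nonneg he]
    calc x ^ e ≤ (C * t) ^ e := Real.rpow_le_rpow hx.le h2 he
    _ = C ^ e * t ^ e := Real.mul_rpow hC0.le ht.le
  · rw [abs_of_neg he]
    calc x ^ e ≤ (t / C) ^ e := Real.rpow_le_rpow_of_nonpos (by positivity) h1 he.le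
    _ = t ^ e / C ^ e := Real.div_rpow ht.le hC0.le e
    _ = C ^ (-e) * t ^ e := by rw [Real.rpow_neg hC0.le]; field_simp

private lemma aux_lo (x t : ℝ) (hx : 0 < x) (ht : 0 < t)
    (h1 : t / 2 ≤ x) (h2 : x ≤ t) (e : ℝ) : (1 / 2 : ℝ) ^ |e| * t ^ e ≤ x ^ e := by
  rcases le_or_gt 0 e with he | he
  · rw [abs_of_nonneg he]
    calc (1 / 2 : ℝ) ^ e * t ^ e = ((1 / 2) * t) ^ e := (Real.mul_rpow (by norm_num) ht.le).symm
    _ ≤ x ^ e := Real.rpow_le_rpow (by positivity) (by linarith) he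
  · rw [abs_of_neg he]
    have h3 : ((1 : ℝ) / 2) ^ (-e) ≤ 1 :=
      Real.rpow_le_one (by norm_num) (by norm_num) (by linarith)
    have h4 : t ^ e ≤ x ^ e := Real.rpow_le_rpow_of_nonpos hx h2 he.le
    have h5 : (0 : ℝ) < t ^ e := Real.rpow_pos_of_pos ht e
    nlinarith

set_option maxHeartbeats 1000000 in
theorem stmt_1 (n m : ℕ) (hm : 1 ≤ m) (p b c : ℕ → ℝ)
    (hp1 : 1 < p 0) (hpmono : ∀ i j, i ≤ j → j < m → p i ≤ p j)
    (hc : ∀ k < m, 0 < c k) (hb1 : 0 ≤ b 0)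
    (μ : ℝ) (hμ : μ ∈ Set.Ioo (0 : ℝ) 1)
    (hbk : ∀ k < m, μ * b 0 ≤ b k ∧ b k ≤ b 0 / μ)
    (M : ℝ) (hM : 1 ≤ M)
    (σ : EuclideanSpace ℝ (Fin n)) (hσ : σ ≠ 0) (hσM : ‖σ‖ ≤ M) :
    c 0 * (1 / 2 : ℝ) ^ (|p 0 - 2| / 2) * (Real.sqrt (b 0) + ‖σ‖) ^ (p 0 - 2) ≤
      (∑ k ∈ Finset.range m, c k * (b k + ‖σ‖ ^ 2) ^ ((p k - 2) / 2)) ∧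
    (∑ k ∈ Finset.range m, c k * (b k + ‖σ‖ ^ 2) ^ ((p k - 2) / 2)) ≤
      ((2 / μ) ^ (|p 0 - 2| / 2) *
        ∑ k ∈ Finset.range m, c k * (b 0 / μ + M ^ 2) ^ ((p k - p 0) / 2)) *
      (Real.sqrt (b 0) + ‖σ‖) ^ (p 0 - 2) := by
  obtain ⟨hμ0, hμ1⟩ := hμ
  set s := ‖σ‖ with hs_def
  have hs : 0 < s := norm_pos_iff.mpr hσ
  set u := Real.sqrt (b 0) + s with hu_def
  have hsq : Real.sqrt (b 0) ^ 2 = b 0 := Real.sq_sqrt hb1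
  have hsqnn : 0 ≤ Real.sqrt (b 0) := Real.sqrt_nonneg _
  have hu : 0 < u := by positivity
  set t : ℝ := u ^ 2 with ht_def
  have ht : 0 < t := by positivity
  have hth : t / 2 ≤ b 0 + s ^ 2 := by
    rw [ht_def, hu_def]; nlinarith [sq_nonneg (Real.sqrt (b 0) - s)]
  have htu : b 0 + s ^ 2 ≤ t := by
    rw [ht_def, hu_def]; nlinarith
  have hte : ∀ e : ℝ, t ^ e = u ^ (2 * e) := by
    intro e
    rw [ht_def, ← Real.rpow_natCast u 2, ← Real.rpow_mul hu.le]
    norm_num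
  have habs : |p 0 - 2| / 2 = |(p 0 - 2) / 2| := by
    rw [abs_div]; norm_num
  have htp : t ^ ((p 0 - 2) / 2) = u ^ (p 0 - 2) := by
    rw [hte]; ring_nf
  have hb0s : 0 < b 0 + s ^ 2 := by positivity
  constructor
  · -- lower bound
    have key : c 0 * (1 / 2 : ℝ) ^ (|p 0 - 2| / 2) * u ^ (p 0 - 2) ≤
        c 0 * (b 0 + s ^ 2) ^ ((p 0 - 2) / 2) := by
      have := aux_lo (b 0 + s ^ 2) t hb0s ht hth htu ((p 0 - 2) / 2)
      rw [← habs, htp] at this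
      have hc0 := hc 0 hm
      nlinarith
    refine key.trans ?_
    refine Finset.single_le_sum (f := fun k => c k * (b k + s ^ 2) ^ ((p k - 2) / 2))
      (fun k hk => ?_) (Finset.mem_range.mpr hm)
    have hck := hc k (Finset.mem_range.mp hk)
    have hbk' := (hbk k (Finset.mem_range.mp hk)).1
    have : 0 < b k + s ^ 2 := by nlinarith
    positivity
  · -- upper bound
    have hC : (1 : ℝ) ≤ 2 / μ := by
      rw [le_div_iff₀ hμ0]; linarith
    have hC0 : (0 : ℝ) < 2 / μ := by positivity
    calc (∑ k ∈ Finset.range m, c k * (b k + s ^ 2) ^ ((p k - 2) / 2))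
        ≤ ∑ k ∈ Finset.range m, (2 / μ) ^ (|p 0 - 2| / 2) *
            (c k * (b 0 / μ + M ^ 2) ^ ((p k - p 0) / 2)) * u ^ (p 0 - 2) := by
          refine Finset.sum_le_sum fun k hk => ?_
          have hkm := Finset.mem_range.mp hk
          have hck := hc k hkm
          obtain ⟨hbl, hbu⟩ := hbk k hkm
          have hbu' : b k * μ ≤ b 0 := (le_div_iff₀ hμ0).mp hbu
          have hx : 0 < b k + s ^ 2 := by nlinarith
          have hpk : p 0 ≤ p k := hpmono 0 k (Nat.zero_le k) hkm
          have hsplit : (b k + s ^ 2) ^ ((p k - 2) / 2) =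
              (b k + s ^ 2) ^ ((p k - p 0) / 2) * (b k + s ^ 2) ^ ((p 0 - 2) / 2) := by
            rw [← Real.rpow_add hx]; ring_nf
          have h1 : (b k + s ^ 2) ^ ((p k - p 0) / 2) ≤
              (b 0 / μ + M ^ 2) ^ ((p k - p 0) / 2) := by
            apply Real.rpow_le_rpow hx.le _ (by linarith)
            have : s ^ 2 ≤ M ^ 2 := by nlinarith
            linarith
          have h2 : (b k + s ^ 2) ^ ((p 0 - 2) / 2) ≤
              (2 / μ) ^ (|p 0 - 2| / 2) * u ^ (p 0 - 2) := by
            have hlo : t / (2 / μ) ≤ b k + s ^ 2 := by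
              rw [div_div_eq_mul_div, div_le_iff₀ (by norm_num : (0:ℝ) < 2)]
              nlinarith
            have hhi : b k + s ^ 2 ≤ (2 / μ) * t := by
              rw [div_mul_eq_mul_div, le_div_iff₀ hμ0]
              nlinarith
            have := aux_up (b k + s ^ 2) t (2 / μ) hx ht hC hlo hhi ((p 0 - 2) / 2)
            rwa [← habs, htp] at this
          have hA : 0 < (b k + s ^ 2) ^ ((p k - p 0) / 2) := Real.rpow_pos_of_pos hx _
          have hB : 0 < (b k + s ^ 2) ^ ((p 0 - 2) / 2) := Real.rpow_pos_of_pos hx _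
          have hY : 0 ≤ (b 0 / μ + M ^ 2) ^ ((p k - p 0) / 2) := (hA.trans_le h1).le
          have hmm := mul_le_mul h1 h2 hB.le hY
          calc c k * (b k + s ^ 2) ^ ((p k - 2) / 2)
              = c k * ((b k + s ^ 2) ^ ((p k - p 0) / 2) *
                  (b k + s ^ 2) ^ ((p 0 - 2) / 2)) := by rw [hsplit]
            _ ≤ c k * ((b 0 / μ + M ^ 2) ^ ((p k - p 0) / 2) *
                  ((2 / μ) ^ (|p 0 - 2| / 2) * u ^ (p 0 - 2))) :=
                mul_le_mul_of_nonneg_left hmm hck.le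
            _ = (2 / μ) ^ (|p 0 - 2| / 2) *
                  (c k * (b 0 / μ + M ^ 2) ^ ((p k - p 0) / 2)) * u ^ (p 0 - 2) := by ring
      _ = ((2 / μ) ^ (|p 0 - 2| / 2) *
            ∑ k ∈ Finset.range m, c k * (b 0 / μ + M ^ 2) ^ ((p k - p 0) / 2)) *
          u ^ (p 0 - 2) := by
          rw [Finset.mul_sum, Finset.sum_mul]
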